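/- arXiv:1902.07689 — 2 statements merged into one kernel-verified Lean document; each statement's English description precedes it below -/
import Mathlib

section
/- Let 𝓛 be a subspace lattice on a complex separable Hilbert space H, let T be a bounded operator on H and let M₁, M₂ ∈ 𝓛 with M₁ ⊊ M₂. If ω_T(M₁) ≠ ω_T(M₂), then φ_T(M₁) ⊊ φ_T(M₂) and Ψ_T(M₁) ⊊ Ψ_T(M₂). -/
open scoped InnerProductSpace

variable {H : Type*} [NormedAddCommGroup H] [InnerProductSpace ℂ H]
  [CompleteSpace H] [TopologicalSpace.SeparableSpace H]

/-- A subspace lattice on `H`: a set of closed subspaces containing `⊥` and `⊤`,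
closed under arbitrary intersections and closed linear spans. -/
def IsSubspaceLattice (𝓛 : Set (Submodule ℂ H)) : Prop :=
  (∀ M ∈ 𝓛, IsClosed (M : Set H)) ∧ ⊥ ∈ 𝓛 ∧ ⊤ ∈ 𝓛 ∧
  (∀ S ⊆ 𝓛, sInf S ∈ 𝓛) ∧ (∀ S ⊆ 𝓛, (sSup S).topologicalClosure ∈ 𝓛)

/-- A nest: a totally ordered subspace lattice. -/
def IsNest (𝓛 : Set (Submodule ℂ H)) : Prop :=
  IsSubspaceLattice 𝓛 ∧ ∀ M ∈ 𝓛, ∀ N ∈ 𝓛, M ≤ N ∨ N ≤ M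

/-- A continuous nest. -/
def IsContinuousNest (𝓛 : Set (Submodule ℂ H)) : Prop :=
  IsNest 𝓛 ∧ ∀ M ∈ 𝓛, M = (sSup {N ∈ 𝓛 | N < M}).topologicalClosure

/-- `M_x`: the intersection of all members of `𝓛` containing `x`. -/
noncomputable def Mx (𝓛 : Set (Submodule ℂ H)) (x : H) : Submodule ℂ H :=
  sInf {M ∈ 𝓛 | x ∈ M}

/-- `M̂_x`: the closed span of all members of `𝓛` orthogonal to `x`. -/
noncomputable def Mhat (𝓛 : Set (Submodule ℂ H)) (x : H) : Submodule ℂ H :=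
  (sSup {M ∈ 𝓛 | ∀ v ∈ M, inner ℂ x v = (0 : ℂ)}).topologicalClosure

/-- `φ_T(M)`: the closed span of all members `M'` of `𝓛` with `T(M') ⊆ M`. -/
noncomputable def phiT (𝓛 : Set (Submodule ℂ H)) (T : H →L[ℂ] H) (M : Submodule ℂ H) :
    Submodule ℂ H :=
  (sSup {M' ∈ 𝓛 | ∀ v ∈ M', T v ∈ M}).topologicalClosure

/-- `Ψ_T(M)`: the intersection of all `M' ∈ 𝓛` with `φ_T(M') = φ_T(M)`. -/
noncomputable def PsiT (𝓛 : Set (Submodule ℂ H)) (T : H →L[ℂ] H) (M : Submodule ℂ H) :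
    Submodule ℂ H :=
  sInf {M' ∈ 𝓛 | phiT 𝓛 T M' = phiT 𝓛 T M}

/-- `σ_T(M)`: the closed span of all `M' ∈ 𝓛` with `φ_T(M') = φ_T(M)`. -/
noncomputable def sigmaT (𝓛 : Set (Submodule ℂ H)) (T : H →L[ℂ] H) (M : Submodule ℂ H) :
    Submodule ℂ H :=
  (sSup {M' ∈ 𝓛 | phiT 𝓛 T M' = phiT 𝓛 T M}).topologicalClosure

/-- The kernel map `ω_T`. -/
noncomputable def omegaT (𝓛 : Set (Submodule ℂ H)) (T : H →L[ℂ] H) (M : Submodule ℂ H) :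
    Submodule ℂ H × Submodule ℂ H :=
  (phiT 𝓛 T M, PsiT 𝓛 T M)

/-- The rank-one operator `x ⊗ y : z ↦ ⟨z, y⟩ x`. -/
noncomputable def rankOne (x y : H) : H →L[ℂ] H :=
  (innerSL ℂ y).smulRight x

/-- The nest algebra of a subspace lattice. -/
def nestAlg (𝓛 : Set (Submodule ℂ H)) : Set (H →L[ℂ] H) :=
  {T | ∀ M ∈ 𝓛, ∀ v ∈ M, T v ∈ M}

/-- Lie module over the nest algebra. -/
def IsLieModule (𝓛 : Set (Submodule ℂ H)) (𝓜 : Submodule ℂ (H →L[ℂ] H)) : Prop :=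
  ∀ A ∈ 𝓜, ∀ T ∈ nestAlg 𝓛, A.comp T - T.comp A ∈ 𝓜

/-- Orthogonal projection of a vector onto a closed subspace (junk value `0` if not closed). -/
noncomputable def projVec (N : Submodule ℂ H) (z : H) : H := by
  classical
  exact if h : IsClosed (N : Set H) then
    have : CompleteSpace N := h.completeSpace_coe
    (N.orthogonalProjectionOnto z : H)
  else 0

section Aux

variable {H : Type*} [NormedAddCommGroup H] [InnerProductSpace ℂ H]

lemma phiT_maps (𝓛 : Set (Submodule ℂ H)) (T : H →L[ℂ] H) (M : Submodule ℂ H)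
    (hM : IsClosed (M : Set H)) : ∀ v ∈ phiT 𝓛 T M, T v ∈ M := by
  have h : phiT 𝓛 T M ≤ M.comap (T : H →ₗ[ℂ] H) := by
    apply Submodule.topologicalClosure_minimal
    · exact sSup_le fun N hN v hv => hN.2 v hv
    · exact hM.preimage T.continuous
  exact fun v hv => h hv

lemma phiT_mono (𝓛 : Set (Submodule ℂ H)) (T : H →L[ℂ] H) {M₁ M₂ : Submodule ℂ H}
    (h : M₁ ≤ M₂) : phiT 𝓛 T M₁ ≤ phiT 𝓛 T M₂ := by
  unfold phiT
  apply Submodule.topologicalClosure_mono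
  apply sSup_le_sSup
  rintro N ⟨hN1, hN2⟩
  exact ⟨hN1, fun v hv => h (hN2 v hv)⟩

lemma le_phiT (𝓛 : Set (Submodule ℂ H)) (T : H →L[ℂ] H) {N M : Submodule ℂ H}
    (hN : N ∈ 𝓛) (h : ∀ v ∈ N, T v ∈ M) : N ≤ phiT 𝓛 T M := by
  unfold phiT
  exact le_trans (le_sSup (Set.mem_sep hN h)) (Submodule.le_topologicalClosure _)

lemma phiT_PsiT (𝓛 : Set (Submodule ℂ H)) (h𝓛 : IsSubspaceLattice 𝓛) (T : H →L[ℂ] H)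
    {M : Submodule ℂ H} (hM : M ∈ 𝓛) :
    phiT 𝓛 T (PsiT 𝓛 T M) = phiT 𝓛 T M := by
  apply le_antisymm
  · exact phiT_mono 𝓛 T (sInf_le ⟨hM, rfl⟩)
  · apply Submodule.topologicalClosure_mono
    apply sSup_le_sSup
    rintro N ⟨hN𝓛, hN⟩
    refine ⟨hN𝓛, fun v hv => Submodule.mem_sInf.2 ?_⟩
    rintro M' ⟨hM'𝓛, hphi⟩
    have h1 : N ≤ phiT 𝓛 T M' := hphi ▸ le_phiT 𝓛 T hN𝓛 hN
    exact phiT_maps 𝓛 T M' (h𝓛.1 M' hM'𝓛) v (h1 hv)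

lemma PsiT_mono (𝓛 : Set (Submodule ℂ H)) (h𝓛 : IsSubspaceLattice 𝓛) (T : H →L[ℂ] H)
    {M₁ M₂ : Submodule ℂ H} (h₁ : M₁ ∈ 𝓛) (hle : M₁ ≤ M₂) :
    PsiT 𝓛 T M₁ ≤ PsiT 𝓛 T M₂ := by
  apply le_sInf
  rintro M' ⟨hM'𝓛, hphi⟩
  have hP𝓛 : sInf {M₁, M'} ∈ 𝓛 := by
    apply h𝓛.2.2.2.1
    rintro x (rfl | rfl) <;> assumption
  rw [sInf_pair] at hP𝓛
  have hphiP : phiT 𝓛 T (M₁ ⊓ M') = phiT 𝓛 T M₁ := by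
    apply le_antisymm (phiT_mono 𝓛 T inf_le_left)
    apply Submodule.topologicalClosure_mono
    apply sSup_le_sSup
    rintro N ⟨hN𝓛, hN⟩
    refine ⟨hN𝓛, fun v hv => Submodule.mem_inf.2 ⟨hN v hv, ?_⟩⟩
    have h1 : N ≤ phiT 𝓛 T M' := by
      rw [hphi]
      exact le_trans (le_phiT 𝓛 T hN𝓛 hN) (phiT_mono 𝓛 T hle)
    exact phiT_maps 𝓛 T M' (h𝓛.1 M' hM'𝓛) v (h1 hv)
  exact le_trans (sInf_le ⟨hP𝓛, hphiP⟩) inf_le_right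

end Aux

theorem stmt_7 (𝓛 : Set (Submodule ℂ H)) (h𝓛 : IsSubspaceLattice 𝓛)
    (T : H →L[ℂ] H) (M₁ M₂ : Submodule ℂ H) (h₁ : M₁ ∈ 𝓛) (h₂ : M₂ ∈ 𝓛)
    (hlt : M₁ < M₂) (hne : omegaT 𝓛 T M₁ ≠ omegaT 𝓛 T M₂) :
    phiT 𝓛 T M₁ < phiT 𝓛 T M₂ ∧ PsiT 𝓛 T M₁ < PsiT 𝓛 T M₂ := by
  have hphile : phiT 𝓛 T M₁ ≤ phiT 𝓛 T M₂ := phiT_mono 𝓛 T hlt.le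
  have hphine : phiT 𝓛 T M₁ ≠ phiT 𝓛 T M₂ := by
    intro h
    apply hne
    simp only [omegaT, PsiT, h]
  have hPsile : PsiT 𝓛 T M₁ ≤ PsiT 𝓛 T M₂ := PsiT_mono 𝓛 h𝓛 T h₁ hlt.le
  have hPsine : PsiT 𝓛 T M₁ ≠ PsiT 𝓛 T M₂ := by
    intro h
    apply hphine
    rw [← phiT_PsiT 𝓛 h𝓛 T h₁, ← phiT_PsiT 𝓛 h𝓛 T h₂, h]
  exact ⟨lt_of_le_of_ne hphile hphine, lt_of_le_of_ne hPsile hPsine⟩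
end

section
/- Let 𝓛 be a continuous nest on a complex separable Hilbert space H and let 𝓜 be a norm closed Lie 𝓣(𝓛)-module. If x, y ∈ H are nonzero and the rank-one operator x⊗y belongs to 𝓜, then for all z, w ∈ H and all M ∈ 𝓛 the operator (Q_M(Q_{M_x} z)) ⊗ (Q_{M^⊥}(Q_{(M̂_y)^⊥} w)) belongs to 𝓜. (In projection terms: Q_M((Q_{M_x}z) ⊗ (Q_{(M̂_y)^⊥}w))Q_{M^⊥} ∈ 𝓜.) -/
open scoped InnerProductSpace

variable {H : Type*} [NormedAddCommGroup H] [InnerProductSpace ℂ H]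
  [CompleteSpace H] [TopologicalSpace.SeparableSpace H]

set_option linter.unusedSectionVars false
set_option maxHeartbeats 1000000

section Aux16

lemma rankOne_apply (x y z : H) : rankOne x y z = ⟪y, z⟫_ℂ • x := rfl

lemma rankOne_comp_rankOne (a b u v : H) :
    (rankOne a b).comp (rankOne u v) = ⟪b, u⟫_ℂ • rankOne a v := by
  ext z
  simp [rankOne_apply, smul_smul]
  ring_nf

lemma rankOne_add_right (a b b' : H) :
    rankOne a (b + b') = rankOne a b + rankOne a b' := by
  ext z; simp [rankOne_apply, inner_add_left, add_smul]

lemma rankOne_sub_right (a b b' : H) :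
    rankOne a (b - b') = rankOne a b - rankOne a b' := by
  ext z; simp [rankOne_apply, inner_sub_left, sub_smul]

lemma rankOne_add_left (a a' b : H) :
    rankOne (a + a') b = rankOne a b + rankOne a' b := by
  ext z; simp [rankOne_apply]

lemma rankOne_sub_left (a a' b : H) :
    rankOne (a - a') b = rankOne a b - rankOne a' b := by
  ext z; simp [rankOne_apply, smul_sub]

lemma rankOne_zero_left (b : H) : rankOne (0 : H) b = 0 := by
  ext z; simp [rankOne_apply]

lemma rankOne_zero_right (a : H) : rankOne a (0 : H) = 0 := by
  ext z; simp [rankOne_apply]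

lemma rankOne_norm (a b : H) : ‖rankOne a b‖ = ‖b‖ * ‖a‖ := by
  rw [rankOne, ContinuousLinearMap.norm_smulRight_apply, innerSL_apply_norm]

/-- Orthogonal projection as a continuous linear endomorphism. -/
noncomputable def pj (N : Submodule ℂ H) (hN : IsClosed (N : Set H)) : H →L[ℂ] H :=
  haveI := hN.completeSpace_coe
  N.subtypeL.comp (N.orthogonalProjectionOnto)

lemma pj_mem (N : Submodule ℂ H) (hN : IsClosed (N : Set H)) (z : H) : pj N hN z ∈ N := by
  haveI := hN.completeSpace_coe
  exact (N.orthogonalProjectionOnto z).2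

lemma pj_eq_self (N : Submodule ℂ H) (hN : IsClosed (N : Set H)) {z : H} (hz : z ∈ N) :
    pj N hN z = z := by
  haveI := hN.completeSpace_coe
  change (N.orthogonalProjectionOnto z : H) = z
  exact Submodule.starProjection_eq_self_iff.mpr hz

lemma pj_inner_swap (N : Submodule ℂ H) (hN : IsClosed (N : Set H)) (u v : H) :
    ⟪pj N hN u, v⟫_ℂ = ⟪u, pj N hN v⟫_ℂ := by
  haveI := hN.completeSpace_coe
  exact Submodule.inner_starProjection_left_eq_right N u v

lemma pj_eq_zero (N : Submodule ℂ H) (hN : IsClosed (N : Set H)) {z : H}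
    (hz : z ∈ Nᗮ) : pj N hN z = 0 := by
  haveI := hN.completeSpace_coe
  have := Submodule.orthogonalProjectionOnto_eq_zero_iff (K := N) (v := z) |>.mpr hz
  simp [pj, this]

lemma sub_pj_mem_orthogonal (N : Submodule ℂ H) (hN : IsClosed (N : Set H)) (z : H) :
    z - pj N hN z ∈ Nᗮ := by
  haveI := hN.completeSpace_coe
  exact Submodule.sub_starProjection_mem_orthogonal z

lemma pj_minimal (N : Submodule ℂ H) (hN : IsClosed (N : Set H)) (z : H) {s : H} (hs : s ∈ N) :
    ‖z - pj N hN z‖ ≤ ‖z - s‖ := by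
  haveI := hN.completeSpace_coe
  rw [show pj N hN z = N.starProjection z from rfl, Submodule.starProjection_minimal]
  exact ciInf_le ⟨0, fun w hw => by rcases hw with ⟨i, rfl⟩; positivity⟩ (⟨s, hs⟩ : N)

lemma pj_idem (N : Submodule ℂ H) (hN : IsClosed (N : Set H)) (z : H) :
    pj N hN (pj N hN z) = pj N hN z :=
  pj_eq_self N hN (pj_mem N hN z)

lemma inner_pj_self (N : Submodule ℂ H) (hN : IsClosed (N : Set H)) (z : H) :
    ⟪z, pj N hN z⟫_ℂ = (‖pj N hN z‖ : ℂ) ^ 2 := by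
  have h1 : ⟪z - pj N hN z, pj N hN z⟫_ℂ = 0 :=
    N.inner_left_of_mem_orthogonal (pj_mem N hN z) (sub_pj_mem_orthogonal N hN z)
  have h2 : ⟪z, pj N hN z⟫_ℂ = ⟪z - pj N hN z, pj N hN z⟫_ℂ + ⟪pj N hN z, pj N hN z⟫_ℂ := by
    rw [← inner_add_left, sub_add_cancel]
  rw [h2, h1, zero_add, inner_self_eq_norm_sq_to_K]
  norm_cast

lemma inner_pj_self_ne_zero (N : Submodule ℂ H) (hN : IsClosed (N : Set H)) {z : H}
    (h : pj N hN z ≠ 0) : ⟪z, pj N hN z⟫_ℂ ≠ 0 := by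
  rw [inner_pj_self]
  simpa using h



lemma smul_cancel_mem {𝓜 : Submodule ℂ (H →L[ℂ] H)} {c : ℂ} (hc : c ≠ 0) {A : H →L[ℂ] H}
    (h : c • A ∈ 𝓜) : A ∈ 𝓜 := by
  have h2 := 𝓜.smul_mem c⁻¹ h
  rwa [smul_smul, inv_mul_cancel₀ hc, one_smul] at h2

lemma pj_mem_nestAlg {𝓛 : Set (Submodule ℂ H)} (hnest : IsNest 𝓛)
    {N : Submodule ℂ H} (hN𝓛 : N ∈ 𝓛) (hN : IsClosed (N : Set H)) :
    pj N hN ∈ nestAlg 𝓛 := by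
  intro M hM v hv
  rcases hnest.2 N hN𝓛 M hM with h | h
  · exact h (pj_mem N hN v)
  · rw [pj_eq_self N hN (h hv)]; exact hv

lemma rankOne_mem_nestAlg {𝓛 : Set (Submodule ℂ H)} {u v : H}
    (hcond : ∀ N' ∈ 𝓛, u ∈ N' ∨ v ∈ N'ᗮ) : rankOne u v ∈ nestAlg 𝓛 := by
  intro M hM z hz
  rw [rankOne_apply]
  rcases hcond M hM with h | h
  · exact M.smul_mem _ h
  · rw [M.inner_left_of_mem_orthogonal hz h, zero_smul]; exact M.zero_mem

lemma rankOne_mem_nestAlg_of_le {𝓛 : Set (Submodule ℂ H)} (hnest : IsNest 𝓛)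
    {N : Submodule ℂ H} {u v : H} (hN𝓛 : N ∈ 𝓛)
    (hu : u ∈ N) (hv : v ∈ Nᗮ) : rankOne u v ∈ nestAlg 𝓛 :=
  rankOne_mem_nestAlg fun N' hN' => by
    rcases hnest.2 N hN𝓛 N' hN' with h | h
    · exact Or.inl (h hu)
    · exact Or.inr (Submodule.orthogonal_le h hv)

lemma lie_rankOne {𝓛 : Set (Submodule ℂ H)} {𝓜 : Submodule ℂ (H →L[ℂ] H)}
    (hLie : IsLieModule 𝓛 𝓜) {a c u v : H}
    (hA : rankOne a c ∈ 𝓜) (hS : rankOne u v ∈ nestAlg 𝓛) :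
    ⟪c, u⟫_ℂ • rankOne a v - ⟪v, a⟫_ℂ • rankOne u c ∈ 𝓜 := by
  have h := hLie _ hA _ hS
  rwa [rankOne_comp_rankOne, rankOne_comp_rankOne] at h

lemma rankOne_comp_pj (N : Submodule ℂ H) (hN : IsClosed (N : Set H)) (a b : H) :
    (rankOne a b).comp (pj N hN) = rankOne a (pj N hN b) := by
  ext z
  show ⟪b, pj N hN z⟫_ℂ • a = ⟪pj N hN b, z⟫_ℂ • a
  rw [pj_inner_swap]

lemma pj_comp_rankOne (N : Submodule ℂ H) (hN : IsClosed (N : Set H)) (a b : H) :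
    (pj N hN).comp (rankOne a b) = rankOne (pj N hN a) b := by
  ext z
  show pj N hN (⟪b, z⟫_ℂ • a) = ⟪b, z⟫_ℂ • pj N hN a
  rw [map_smul]

lemma B_mem {𝓛 : Set (Submodule ℂ H)} {𝓜 : Submodule ℂ (H →L[ℂ] H)}
    (hnest : IsNest 𝓛) (hLie : IsLieModule 𝓛 𝓜) {x y : H}
    (hxy : rankOne x y ∈ 𝓜) {N : Submodule ℂ H} (hN𝓛 : N ∈ 𝓛) (hN : IsClosed (N : Set H)) :
    rankOne (pj N hN x) (y - pj N hN y) + rankOne (x - pj N hN x) (pj N hN y) ∈ 𝓜 := by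
  have halg := pj_mem_nestAlg hnest hN𝓛 hN
  have h1 := hLie _ hxy _ halg
  rw [rankOne_comp_pj, pj_comp_rankOne] at h1
  have h2 := hLie _ h1 _ halg
  have heq : (rankOne x (pj N hN y) - rankOne (pj N hN x) y).comp (pj N hN)
      - (pj N hN).comp (rankOne x (pj N hN y) - rankOne (pj N hN x) y)
      = rankOne (pj N hN x) (y - pj N hN y) + rankOne (x - pj N hN x) (pj N hN y) := by
    rw [ContinuousLinearMap.sub_comp, ContinuousLinearMap.comp_sub,
        rankOne_comp_pj, rankOne_comp_pj, pj_comp_rankOne, pj_comp_rankOne,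
        pj_idem, pj_idem, rankOne_sub_right, rankOne_sub_left]
    abel
  rwa [heq] at h2

lemma W_core {𝓛 : Set (Submodule ℂ H)} {𝓜 : Submodule ℂ (H →L[ℂ] H)}
    (hnest : IsNest 𝓛) (hLie : IsLieModule 𝓛 𝓜) {x y : H}
    (hxy : rankOne x y ∈ 𝓜) {N : Submodule ℂ H} (hN𝓛 : N ∈ 𝓛) (hN : IsClosed (N : Set H))
    {u v : H} (hu : u ∈ N) (hv : v ∈ Nᗮ) :
    (⟪y, u⟫_ℂ * ⟪v, x⟫_ℂ) • rankOne u v ∈ 𝓜 := by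
  have hB := B_mem hnest hLie hxy hN𝓛 hN
  have hS := rankOne_mem_nestAlg_of_le hnest hN𝓛 hu hv
  have hzero1 : ⟪y - pj N hN y, u⟫_ℂ = 0 :=
    N.inner_left_of_mem_orthogonal hu (sub_pj_mem_orthogonal N hN y)
  have hyu : ⟪pj N hN y, u⟫_ℂ = ⟪y, u⟫_ℂ := by
    rw [pj_inner_swap, pj_eq_self N hN hu]
  have hvpx : ⟪v, pj N hN x⟫_ℂ = 0 := by
    rw [inner_eq_zero_symm]
    exact N.inner_right_of_mem_orthogonal (pj_mem N hN x) hv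
  have hvx' : ⟪v, x - pj N hN x⟫_ℂ = ⟪v, x⟫_ℂ := by
    rw [inner_sub_right, hvpx, sub_zero]
  have hvu : ⟪v, u⟫_ℂ = 0 := N.inner_left_of_mem_orthogonal hu hv
  have hC := hLie _ hB _ hS
  have eqC : (rankOne (pj N hN x) (y - pj N hN y)
        + rankOne (x - pj N hN x) (pj N hN y)).comp (rankOne u v)
      - (rankOne u v).comp (rankOne (pj N hN x) (y - pj N hN y)
        + rankOne (x - pj N hN x) (pj N hN y))
      = ⟪y, u⟫_ℂ • rankOne (x - pj N hN x) v - ⟪v, x⟫_ℂ • rankOne u (pj N hN y) := by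
    rw [ContinuousLinearMap.add_comp, ContinuousLinearMap.comp_add,
        rankOne_comp_rankOne, rankOne_comp_rankOne, rankOne_comp_rankOne, rankOne_comp_rankOne,
        hzero1, hyu, hvpx, hvx']
    simp only [zero_smul, smul_zero, zero_add, add_zero, zero_sub, sub_zero]
  rw [eqC] at hC
  have hD := hLie _ hC _ hS
  have eqD : (⟪y, u⟫_ℂ • rankOne (x - pj N hN x) v
        - ⟪v, x⟫_ℂ • rankOne u (pj N hN y)).comp (rankOne u v)
      - (rankOne u v).comp (⟪y, u⟫_ℂ • rankOne (x - pj N hN x) v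
        - ⟪v, x⟫_ℂ • rankOne u (pj N hN y))
      = (-(2:ℂ) * (⟪y, u⟫_ℂ * ⟪v, x⟫_ℂ)) • rankOne u v := by
    rw [ContinuousLinearMap.sub_comp, ContinuousLinearMap.comp_sub,
        ContinuousLinearMap.smul_comp, ContinuousLinearMap.smul_comp,
        ContinuousLinearMap.comp_smul, ContinuousLinearMap.comp_smul,
        rankOne_comp_rankOne, rankOne_comp_rankOne, rankOne_comp_rankOne, rankOne_comp_rankOne,
        hvu, hyu, hvx']
    simp only [zero_smul, smul_zero, zero_add, add_zero, zero_sub, sub_zero]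
    rw [smul_smul, smul_smul, ← neg_smul, ← sub_smul]
    congr 1
    ring
  rw [eqD] at hD
  rw [mul_smul] at hD
  exact smul_cancel_mem (by norm_num : (-2:ℂ) ≠ 0) hD

lemma lemW {𝓛 : Set (Submodule ℂ H)} {𝓜 : Submodule ℂ (H →L[ℂ] H)}
    (hnest : IsNest 𝓛) (hLie : IsLieModule 𝓛 𝓜) {x y : H}
    (hxy : rankOne x y ∈ 𝓜) {N : Submodule ℂ H} (hN𝓛 : N ∈ 𝓛) (hN : IsClosed (N : Set H))
    (hpy : pj N hN y ≠ 0) (hxN : x ∉ N) :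
    ∀ u ∈ N, ∀ v ∈ Nᗮ, rankOne u v ∈ 𝓜 := by
  set u₀ := pj N hN y with hu₀def
  set v₀ := x - pj N hN x with hv₀def
  have hu₀ : u₀ ∈ N := pj_mem N hN y
  have hv₀ : v₀ ∈ Nᗮ := sub_pj_mem_orthogonal N hN x
  have hyu₀ : ⟪y, u₀⟫_ℂ ≠ 0 := inner_pj_self_ne_zero N hN hpy
  have hv₀ne : v₀ ≠ 0 := by
    intro h0
    exact hxN (by
      have : x = pj N hN x := by rwa [sub_eq_zero] at h0
      rw [this]; exact pj_mem N hN x)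
  have hv₀x : ⟪v₀, x⟫_ℂ ≠ 0 := by
    have hsplit : ⟪v₀, x⟫_ℂ = ⟪v₀, v₀⟫_ℂ := by
      have hx' : x = pj N hN x + v₀ := by rw [hv₀def]; abel
      conv_lhs => rw [hx']
      rw [inner_add_right, inner_eq_zero_symm.mpr
        (N.inner_right_of_mem_orthogonal (pj_mem N hN x) hv₀), zero_add]
    rw [hsplit, inner_self_ne_zero]
    exact hv₀ne
  have core : ∀ u ∈ N, ∀ v ∈ Nᗮ, ⟪y, u⟫_ℂ ≠ 0 → ⟪v, x⟫_ℂ ≠ 0 → rankOne u v ∈ 𝓜 := by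
    intro u hu v hv h1 h2
    exact smul_cancel_mem (mul_ne_zero h1 h2) (W_core hnest hLie hxy hN𝓛 hN hu hv)
  have stage1 : ∀ u ∈ N, ⟪y, u⟫_ℂ ≠ 0 → ∀ v ∈ Nᗮ, rankOne u v ∈ 𝓜 := by
    intro u hu h1 v hv
    by_cases h2 : ⟪v, x⟫_ℂ = 0
    · have e : rankOne u v = rankOne u (v + v₀) - rankOne u v₀ := by
        rw [rankOne_add_right]; abel
      rw [e]
      refine Submodule.sub_mem 𝓜 (core u hu _ (Nᗮ.add_mem hv hv₀) h1 ?_) (core u hu _ hv₀ h1 hv₀x)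
      rw [inner_add_left, h2, zero_add]
      exact hv₀x
    · exact core u hu v hv h1 h2
  intro u hu v hv
  by_cases h1 : ⟪y, u⟫_ℂ = 0
  · have e : rankOne u v = rankOne (u + u₀) v - rankOne u₀ v := by
      rw [rankOne_add_left]; abel
    rw [e]
    refine Submodule.sub_mem 𝓜 (stage1 _ (N.add_mem hu hu₀) ?_ v hv) (stage1 _ hu₀ hyu₀ v hv)
    rw [inner_add_right, h1, zero_add]
    exact hyu₀
  · exact stage1 u hu h1 v hv



lemma nest_closed {𝓛 : Set (Submodule ℂ H)} (hnest : IsNest 𝓛) {N : Submodule ℂ H}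
    (hN : N ∈ 𝓛) : IsClosed (N : Set H) := hnest.1.1 N hN

lemma Mx_mem {𝓛 : Set (Submodule ℂ H)} (hnest : IsNest 𝓛) (x : H) : Mx 𝓛 x ∈ 𝓛 :=
  hnest.1.2.2.2.1 _ (Set.sep_subset _ _)

lemma mem_Mx (𝓛 : Set (Submodule ℂ H)) (x : H) : x ∈ Mx 𝓛 x :=
  Submodule.mem_sInf.mpr fun _ hp => hp.2

lemma Mx_le {𝓛 : Set (Submodule ℂ H)} {x : H} {N : Submodule ℂ H} (hN : N ∈ 𝓛) (hx : x ∈ N) :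
    Mx 𝓛 x ≤ N := sInf_le ⟨hN, hx⟩

lemma not_mem_of_lt_Mx {𝓛 : Set (Submodule ℂ H)} {x : H} {N : Submodule ℂ H} (hN : N ∈ 𝓛)
    (h : N < Mx 𝓛 x) : x ∉ N := fun hx => h.not_ge (Mx_le hN hx)

lemma Mhat_mem {𝓛 : Set (Submodule ℂ H)} (hnest : IsNest 𝓛) (y : H) : Mhat 𝓛 y ∈ 𝓛 :=
  hnest.1.2.2.2.2 _ (Set.sep_subset _ _)

lemma inner_eq_zero_of_mem_Mhat {𝓛 : Set (Submodule ℂ H)} (y : H) :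
    ∀ v ∈ Mhat 𝓛 y, ⟪y, v⟫_ℂ = 0 := by
  have hle : Mhat 𝓛 y ≤ (ℂ ∙ y)ᗮ := by
    apply Submodule.topologicalClosure_minimal
    · apply sSup_le
      rintro N ⟨hN1, hN2⟩
      intro v hv
      rw [Submodule.mem_orthogonal]
      intro u hu
      rcases Submodule.mem_span_singleton.mp hu with ⟨c, rfl⟩
      rw [inner_smul_left, hN2 v hv, mul_zero]
    · exact Submodule.isClosed_orthogonal _
  intro v hv
  exact (hle hv) y (Submodule.mem_span_singleton_self y)

lemma le_Mhat_of_inner_zero {𝓛 : Set (Submodule ℂ H)} {y : H} {N : Submodule ℂ H}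
    (hN : N ∈ 𝓛) (h : ∀ v ∈ N, ⟪y, v⟫_ℂ = 0) : N ≤ Mhat 𝓛 y :=
  le_trans (le_sSup (show N ∈ {M | M ∈ 𝓛 ∧ ∀ v ∈ M, inner ℂ y v = (0:ℂ)} from ⟨hN, h⟩))
    (Submodule.le_topologicalClosure _)

lemma pj_y_ne_zero {𝓛 : Set (Submodule ℂ H)} {y : H} {N : Submodule ℂ H}
    (hN𝓛 : N ∈ 𝓛) (hN : IsClosed (N : Set H)) (h : ¬ N ≤ Mhat 𝓛 y) : pj N hN y ≠ 0 := by
  intro h0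
  apply h
  apply le_Mhat_of_inner_zero hN𝓛
  intro v hv
  have hyo : y ∈ Nᗮ := by
    have h1 := sub_pj_mem_orthogonal N hN y
    rwa [h0, sub_zero] at h1
  exact N.inner_left_of_mem_orthogonal hv hyo

lemma mem_of_rankOne_tendsto_left {𝓜 : Submodule ℂ (H →L[ℂ] H)}
    (hclosed : IsClosed ((𝓜 : Set (H →L[ℂ] H)))) {b l : H}
    {u : ℕ → H} (hu : ∀ k, rankOne (u k) b ∈ 𝓜)
    (hul : Filter.Tendsto u Filter.atTop (nhds l)) : rankOne l b ∈ 𝓜 := by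
  have goal : Filter.Tendsto (fun k => rankOne (u k) b) Filter.atTop (nhds (rankOne l b)) := by
    have h1 : Filter.Tendsto (fun k => ‖u k - l‖) Filter.atTop (nhds (0:ℝ)) :=
      tendsto_iff_norm_sub_tendsto_zero.mp hul
    have h2 := h1.const_mul ‖b‖
    rw [mul_zero] at h2
    rw [tendsto_iff_norm_sub_tendsto_zero]
    have h3 : (fun k => ‖rankOne (u k) b - rankOne l b‖) = fun k => ‖b‖ * ‖u k - l‖ := by
      funext k
      rw [← rankOne_sub_left, rankOne_norm]
    rw [h3]
    exact h2
  exact hclosed.mem_of_tendsto goal (Filter.Eventually.of_forall hu)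

lemma mem_of_rankOne_tendsto_right {𝓜 : Submodule ℂ (H →L[ℂ] H)}
    (hclosed : IsClosed ((𝓜 : Set (H →L[ℂ] H)))) {a l : H}
    {v : ℕ → H} (hv : ∀ k, rankOne a (v k) ∈ 𝓜)
    (hvl : Filter.Tendsto v Filter.atTop (nhds l)) : rankOne a l ∈ 𝓜 := by
  have goal : Filter.Tendsto (fun k => rankOne a (v k)) Filter.atTop (nhds (rankOne a l)) := by
    have h1 : Filter.Tendsto (fun k => ‖v k - l‖) Filter.atTop (nhds (0:ℝ)) :=
      tendsto_iff_norm_sub_tendsto_zero.mp hvl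
    have h2 := h1.mul_const ‖a‖
    rw [zero_mul] at h2
    rw [tendsto_iff_norm_sub_tendsto_zero]
    have h3 : (fun k => ‖rankOne a (v k) - rankOne a l‖) = fun k => ‖v k - l‖ * ‖a‖ := by
      funext k
      rw [← rankOne_sub_right, rankOne_norm]
    rw [h3]
    exact h2
  exact hclosed.mem_of_tendsto goal (Filter.Eventually.of_forall hv)

lemma approx_left {𝓛 : Set (Submodule ℂ H)} (h𝓛 : IsContinuousNest 𝓛)
    {K : Submodule ℂ H} (hK : K ∈ 𝓛) {a : H} (ha : a ∈ K)
    {N₁ : Submodule ℂ H} (hN₁𝓛 : N₁ ∈ 𝓛) (hN₁ : N₁ < K) {ε : ℝ} (hε : 0 < ε) :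
    ∃ N, ∃ (hN𝓛 : N ∈ 𝓛) (hcl : IsClosed ((N : Set H))), N₁ ≤ N ∧ N < K ∧
      ‖pj N hcl a - a‖ < ε := by
  have hKeq := h𝓛.2 K hK
  have haK : a ∈ closure ((sSup {N | N ∈ 𝓛 ∧ N < K} : Submodule ℂ H) : Set H) := by
    rw [← Submodule.topologicalClosure_coe]
    exact hKeq ▸ ha
  rcases Metric.mem_closure_iff.mp haK ε hε with ⟨s, hs, hdist⟩
  have hdirected : DirectedOn (· ≤ ·) {N : Submodule ℂ H | N ∈ 𝓛 ∧ N < K} := by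
    intro p hp q hq
    rcases h𝓛.1.2 p hp.1 q hq.1 with hpq | hqp
    · exact ⟨q, hq, hpq, le_refl q⟩
    · exact ⟨p, hp, le_refl p, hqp⟩
  rcases (Submodule.mem_sSup_of_directed (s := {N | N ∈ 𝓛 ∧ N < K})
    ⟨N₁, ⟨hN₁𝓛, hN₁⟩⟩ hdirected).mp hs with ⟨N₀, hN₀S, hsN₀⟩
  have hbound : ∀ (N : Submodule ℂ H) (hcl : IsClosed ((N : Set H))), s ∈ N →
      ‖pj N hcl a - a‖ < ε := by
    intro N hcl hsN
    have h1 := pj_minimal N hcl a hsN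
    rw [norm_sub_rev]
    calc ‖a - pj N hcl a‖ ≤ ‖a - s‖ := h1
    _ < ε := by rwa [dist_eq_norm] at hdist
  rcases h𝓛.1.2 N₀ hN₀S.1 N₁ hN₁𝓛 with h01 | h10
  · exact ⟨N₁, hN₁𝓛, nest_closed h𝓛.1 hN₁𝓛, le_refl N₁, hN₁,
      hbound N₁ _ (h01 hsN₀)⟩
  · exact ⟨N₀, hN₀S.1, nest_closed h𝓛.1 hN₀S.1, h10, hN₀S.2,
      hbound N₀ _ hsN₀⟩


lemma pj_pj_of_le {N N' : Submodule ℂ H} (hN : IsClosed ((N : Set H)))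
    (hN' : IsClosed ((N' : Set H))) (hle : N ≤ N') (z : H) :
    pj N hN (pj N' hN' z) = pj N hN z := by
  have h1 : z - pj N' hN' z ∈ Nᗮ :=
    Submodule.orthogonal_le hle (sub_pj_mem_orthogonal N' hN' z)
  have h2 : pj N hN (z - pj N' hN' z) = 0 := pj_eq_zero N hN h1
  rw [map_sub] at h2
  exact (sub_eq_zero.mp h2).symm

lemma pj_norm_sq_diff {N N' : Submodule ℂ H} (hN : IsClosed ((N : Set H)))
    (hN' : IsClosed ((N' : Set H))) (hle : N ≤ N') (z : H) :
    ‖pj N' hN' z - pj N hN z‖ * ‖pj N' hN' z - pj N hN z‖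
      = ‖pj N' hN' z‖ * ‖pj N' hN' z‖ - ‖pj N hN z‖ * ‖pj N hN z‖ := by
  have hw : pj N hN (pj N' hN' z) = pj N hN z := pj_pj_of_le hN hN' hle z
  have hsplit : pj N hN z + (pj N' hN' z - pj N hN z) = pj N' hN' z := by abel
  have hm : pj N' hN' z - pj N hN z ∈ Nᗮ := by
    rw [← hw]
    exact sub_pj_mem_orthogonal N hN (pj N' hN' z)
  have horth : ⟪pj N hN z, pj N' hN' z - pj N hN z⟫_ℂ = 0 :=
    N.inner_right_of_mem_orthogonal (pj_mem N hN z) hm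
  have hpyth := norm_add_sq_eq_norm_sq_add_norm_sq_of_inner_eq_zero _ _ horth
  rw [hsplit] at hpyth
  linarith

lemma pj_norm_le_of_le {N N' : Submodule ℂ H} (hN : IsClosed ((N : Set H)))
    (hN' : IsClosed ((N' : Set H))) (hle : N ≤ N') (z : H) :
    ‖pj N hN z‖ * ‖pj N hN z‖ ≤ ‖pj N' hN' z‖ * ‖pj N' hN' z‖ := by
  have := pj_norm_sq_diff hN hN' hle z
  nlinarith [norm_nonneg (pj N' hN' z - pj N hN z)]

lemma right_approx {𝓛 : Set (Submodule ℂ H)} (hnest : IsNest 𝓛) {h : Submodule ℂ H}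
    (hh𝓛 : h ∈ 𝓛) (hplus : sInf {N | N ∈ 𝓛 ∧ h < N} = h) {b : H} (hb : b ∈ hᗮ)
    (hne : h ≠ ⊤) {ε : ℝ} (hε : 0 < ε) :
    ∃ N, ∃ (hN𝓛 : N ∈ 𝓛) (hcl : IsClosed ((N : Set H))), h < N ∧ ‖pj N hcl b‖ < ε := by
  classical
  set 𝒮 : Set (Submodule ℂ H) := {N | N ∈ 𝓛 ∧ h < N} with h𝒮
  have htopS : (⊤ : Submodule ℂ H) ∈ 𝒮 := ⟨hnest.1.2.2.1, lt_of_le_of_ne le_top hne⟩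
  -- squared norms of projections
  set q : ∀ N : Submodule ℂ H, N ∈ 𝒮 → ℝ :=
    fun N hN => ‖pj N (nest_closed hnest hN.1) b‖ * ‖pj N (nest_closed hnest hN.1) b‖ with hq
  set R : Set ℝ := {r | ∃ N, ∃ hN : N ∈ 𝒮, r = q N hN} with hR
  have hRne : R.Nonempty := ⟨q ⊤ htopS, ⊤, htopS, rfl⟩
  have hRbdd : BddBelow R := by
    refine ⟨0, ?_⟩
    rintro r ⟨N, hN, rfl⟩
    positivity
  set c : ℝ := sInf R with hc
  have hcle : ∀ N (hN : N ∈ 𝒮), c ≤ q N hN := fun N hN => csInf_le hRbdd ⟨N, hN, rfl⟩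
  have hsel : ∀ k : ℕ, ∃ N, ∃ hN : N ∈ 𝒮, q N hN < c + 1/((k:ℝ)+1) := by
    intro k
    by_contra hcon
    push_neg at hcon
    have : c + 1/((k:ℝ)+1) ≤ c := by
      apply le_csInf hRne
      rintro r ⟨N, hN, rfl⟩
      exact hcon N hN
    have hpos : (0:ℝ) < 1/((k:ℝ)+1) := by positivity
    linarith
  choose N hNS hNq using hsel
  set u : ℕ → H := fun k => pj (N k) (nest_closed hnest (hNS k).1) b with hu
  -- pairwise estimate
  have hpair : ∀ (P P' : Submodule ℂ H) (hP : P ∈ 𝒮) (hP' : P' ∈ 𝒮),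
      ‖pj P (nest_closed hnest hP.1) b - pj P' (nest_closed hnest hP'.1) b‖ *
      ‖pj P (nest_closed hnest hP.1) b - pj P' (nest_closed hnest hP'.1) b‖
        ≤ (q P hP - c) + (q P' hP' - c) := by
    intro P P' hP hP'
    rcases hnest.2 P hP.1 P' hP'.1 with hle | hle
    · have := pj_norm_sq_diff (nest_closed hnest hP.1) (nest_closed hnest hP'.1) hle b
      rw [norm_sub_rev]
      have h1 := hcle P hP
      have h2 := hcle P' hP'
      simp only [hq] at this h1 h2 ⊢
      nlinarith
    · have := pj_norm_sq_diff (nest_closed hnest hP'.1) (nest_closed hnest hP.1) hle b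
      have h1 := hcle P hP
      have h2 := hcle P' hP'
      simp only [hq] at this h1 h2 ⊢
      nlinarith
  have hcauchy : CauchySeq u := by
    rw [Metric.cauchySeq_iff']
    intro δ hδ
    obtain ⟨K, hK⟩ := exists_nat_gt (2/(δ*δ))
    refine ⟨K, fun n hn => ?_⟩
    have hb1 := hpair (N n) (N K) (hNS n) (hNS K)
    have hb2 := hNq n
    have hb3 := hNq K
    have hKpos : (0:ℝ) < (K:ℝ) + 1 := by positivity
    have hnn : 1/((n:ℝ)+1) ≤ 1/((K:ℝ)+1) := by
      apply one_div_le_one_div_of_le hKpos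
      have : (K:ℝ) ≤ (n:ℝ) := by exact_mod_cast hn
      linarith
    have hKb : 1/((K:ℝ)+1) < δ*δ/2 := by
      rw [div_lt_iff₀ hKpos]
      rw [div_lt_iff₀ (by positivity : (0:ℝ) < δ*δ)] at hK
      nlinarith
    rw [dist_eq_norm]
    have hnorm : ‖u n - u K‖ * ‖u n - u K‖ < δ * δ := by
      calc ‖u n - u K‖ * ‖u n - u K‖ ≤ (q (N n) (hNS n) - c) + (q (N K) (hNS K) - c) := hb1
      _ < 1/((n:ℝ)+1) + 1/((K:ℝ)+1) := by linarith
      _ ≤ 1/((K:ℝ)+1) + 1/((K:ℝ)+1) := by linarith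
      _ < δ * δ := by linarith
    nlinarith [norm_nonneg (u n - u K), hδ]
  obtain ⟨d, hd⟩ := cauchySeq_tendsto_of_complete hcauchy
  have hdmem : ∀ P, P ∈ 𝒮 → d ∈ P := by
    intro P hP
    have hPcl := nest_closed hnest hP.1
    have hmin : ∀ k : ℕ, ∃ Q, ∃ hQ : Q ∈ 𝒮, Q ≤ P ∧ Q ≤ N k := by
      intro k
      rcases hnest.2 P hP.1 (N k) (hNS k).1 with hle | hle
      · exact ⟨P, hP, le_refl P, hle⟩
      · exact ⟨N k, hNS k, hle, le_refl _⟩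
    choose Q hQS hQP hQN using hmin
    set w : ℕ → H := fun k => pj (Q k) (nest_closed hnest (hQS k).1) b with hwdef
    have hwP : ∀ k, w k ∈ P := fun k => hQP k (pj_mem _ _ b)
    have hdiff : ∀ k, ‖u k - w k‖ * ‖u k - w k‖ ≤ 1/((k:ℝ)+1) := by
      intro k
      have heq := pj_norm_sq_diff (nest_closed hnest (hQS k).1)
        (nest_closed hnest (hNS k).1) (hQN k) b
      have h1 := hcle (Q k) (hQS k)
      have h2 := hNq k
      simp only [hq] at h1 h2
      rw [hu, hwdef]
      simp only
      nlinarith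
    have huw : Filter.Tendsto (fun k => u k - w k) Filter.atTop (nhds 0) := by
      rw [tendsto_zero_iff_norm_tendsto_zero]
      apply squeeze_zero (fun k => norm_nonneg _)
        (g := fun k : ℕ => Real.sqrt (1/((k:ℝ)+1)))
        (fun k => Real.le_sqrt_of_sq_le (by rw [sq]; exact hdiff k))
      have hsq := (tendsto_one_div_add_atTop_nhds_zero_nat).sqrt
      rwa [Real.sqrt_zero] at hsq
    have hwt : Filter.Tendsto w Filter.atTop (nhds d) := by
      have h5 := hd.sub huw
      rw [sub_zero] at h5
      have h6 : (fun k => u k - (u k - w k)) = w := by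
        funext k; abel
      rwa [h6] at h5
    exact hPcl.mem_of_tendsto hwt (Filter.Eventually.of_forall hwP)
  have hdh : d ∈ h := by
    rw [← hplus]
    exact Submodule.mem_sInf.mpr fun P hP => hdmem P hP
  have hbd : ⟪b, d⟫_ℂ = 0 := Submodule.inner_left_of_mem_orthogonal hdh hb
  have htend2 : Filter.Tendsto (fun k => ⟪b, u k⟫_ℂ) Filter.atTop (nhds (⟪b, d⟫_ℂ)) :=
    Filter.Tendsto.inner tendsto_const_nhds hd
  rw [hbd] at htend2
  have htend3 : Filter.Tendsto (fun k => ‖u k‖ * ‖u k‖) Filter.atTop (nhds (0:ℝ)) := by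
    have h7 := htend2.norm
    rw [norm_zero] at h7
    have h8 : (fun k => ‖⟪b, u k⟫_ℂ‖) = fun k => ‖u k‖ * ‖u k‖ := by
      funext k
      rw [inner_pj_self, norm_pow, Complex.norm_real]
      show |‖u k‖| ^ 2 = ‖u k‖ * ‖u k‖
      rw [abs_norm, sq]
    rwa [h8] at h7
  have hev : ∀ᶠ k in Filter.atTop, ‖u k‖ * ‖u k‖ < ε * ε :=
    htend3.eventually (gt_mem_nhds (by positivity))
  obtain ⟨k, hk⟩ := hev.exists
  refine ⟨N k, (hNS k).1, nest_closed hnest (hNS k).1, (hNS k).2, ?_⟩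
  nlinarith [norm_nonneg (u k)]



lemma inner_sub_pj_ne_zero {N : Submodule ℂ H} (hcl : IsClosed ((N : Set H))) {x : H}
    (hxN : x ∉ N) : ⟪x - pj N hcl x, x⟫_ℂ ≠ 0 := by
  set v₀ := x - pj N hcl x with hv₀def
  have hv₀ : v₀ ∈ Nᗮ := sub_pj_mem_orthogonal N hcl x
  have hv₀ne : v₀ ≠ 0 := by
    intro h0
    apply hxN
    have hx' : x = pj N hcl x := by rwa [sub_eq_zero] at h0
    rw [hx']
    exact pj_mem N hcl x
  have hsplit : ⟪v₀, x⟫_ℂ = ⟪v₀, v₀⟫_ℂ := by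
    have hx' : x = pj N hcl x + v₀ := by rw [hv₀def]; abel
    conv_lhs => rw [hx']
    rw [inner_add_right, inner_eq_zero_symm.mpr
      (N.inner_right_of_mem_orthogonal (pj_mem N hcl x) hv₀), zero_add]
  rw [hsplit, inner_self_ne_zero]
  exact hv₀ne

lemma small_rankOne_y {𝓛 : Set (Submodule ℂ H)} {𝓜 : Submodule ℂ (H →L[ℂ] H)}
    (hnest : IsNest 𝓛) (hLie : IsLieModule 𝓛 𝓜) {x y : H} (hxy : rankOne x y ∈ 𝓜)
    {N : Submodule ℂ H} (hN𝓛 : N ∈ 𝓛) (hcl : IsClosed ((N : Set H)))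
    (hNh : N ≤ Mhat 𝓛 y) (hxN : x ∉ N) :
    ∀ u ∈ N, rankOne u y ∈ 𝓜 := by
  intro u hu
  have hv₀ : x - pj N hcl x ∈ Nᗮ := sub_pj_mem_orthogonal N hcl x
  have hS := rankOne_mem_nestAlg_of_le hnest hN𝓛 hu hv₀
  have hlie := lie_rankOne hLie hxy hS
  have hyu : ⟪y, u⟫_ℂ = 0 := inner_eq_zero_of_mem_Mhat y u (hNh hu)
  rw [hyu, zero_smul, zero_sub] at hlie
  have hmem := 𝓜.neg_mem hlie
  rw [neg_neg] at hmem
  exact smul_cancel_mem (inner_sub_pj_ne_zero hcl hxN) hmem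

lemma lemFin {𝓛 : Set (Submodule ℂ H)} {𝓜 : Submodule ℂ (H →L[ℂ] H)}
    (h𝓛 : IsContinuousNest 𝓛) (hclosed : IsClosed ((𝓜 : Set (H →L[ℂ] H))))
    (hLie : IsLieModule 𝓛 𝓜) {y a b : H}
    (hay : rankOne a y ∈ 𝓜) (hah : a ∈ Mhat 𝓛 y) (hbh : b ∈ (Mhat 𝓛 y)ᗮ) :
    rankOne a b ∈ 𝓜 := by
  have hnest := h𝓛.1
  set h := Mhat 𝓛 y with hhdef
  have hh𝓛 : h ∈ 𝓛 := Mhat_mem hnest y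
  have hba : ⟪b, a⟫_ℂ = 0 := Submodule.inner_left_of_mem_orthogonal hah hbh
  by_cases htop : h = ⊤
  · have hb0 : b = 0 := by
      rw [htop, Submodule.top_orthogonal_eq_bot] at hbh
      simpa using hbh
    rw [hb0, rankOne_zero_right]
    exact 𝓜.zero_mem
  have hp𝓛 : sInf {N | N ∈ 𝓛 ∧ h < N} ∈ 𝓛 :=
    hnest.1.2.2.2.1 _ (fun N hN => hN.1)
  have h_le_hp : h ≤ sInf {N | N ∈ 𝓛 ∧ h < N} := le_sInf fun N hN => le_of_lt hN.2
  by_cases hph : sInf {N | N ∈ 𝓛 ∧ h < N} = h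
  · -- right-continuity at h : approximate
    have hsel : ∀ k : ℕ, ∃ N, ∃ (hN𝓛 : N ∈ 𝓛) (hcl : IsClosed ((N : Set H))), h < N ∧
        ‖pj N hcl b‖ < 1/((k:ℝ)+1) :=
      fun k => right_approx hnest hh𝓛 hph hbh htop (by positivity)
    choose N hN𝓛' hcl hlt hsmall using hsel
    have hstep : ∀ k, rankOne a (b - pj (N k) (hcl k) b) ∈ 𝓜 := by
      intro k
      have hu' : pj (N k) (hcl k) y ≠ 0 :=
        pj_y_ne_zero (hN𝓛' k) (hcl k) (fun hle => (hlt k).not_ge hle)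
      have hS := rankOne_mem_nestAlg_of_le hnest (hN𝓛' k) (pj_mem (N k) (hcl k) y)
        (sub_pj_mem_orthogonal (N k) (hcl k) b)
      have hlie := lie_rankOne hLie hay hS
      have haNk : a ∈ N k := le_of_lt (hlt k) hah
      have hz : ⟪b - pj (N k) (hcl k) b, a⟫_ℂ = 0 := by
        rw [inner_sub_left, pj_inner_swap, pj_eq_self (N k) (hcl k) haNk, hba, sub_self]
      rw [hz, zero_smul, sub_zero] at hlie
      exact smul_cancel_mem (inner_pj_self_ne_zero (N k) (hcl k) hu') hlie
    apply mem_of_rankOne_tendsto_right hclosed hstep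
    have hnorm : Filter.Tendsto (fun k => ‖(b - pj (N k) (hcl k) b) - b‖)
        Filter.atTop (nhds (0:ℝ)) := by
      apply squeeze_zero (fun k => norm_nonneg _) (g := fun k : ℕ => 1/((k:ℝ)+1))
        (fun k => by
          rw [sub_sub_cancel_left, norm_neg]
          exact le_of_lt (hsmall k))
      exact tendsto_one_div_add_atTop_nhds_zero_nat
    exact tendsto_iff_norm_sub_tendsto_zero.mpr hnorm
  · -- jump case
    have hlt : h < sInf {N | N ∈ 𝓛 ∧ h < N} := lt_of_le_of_ne h_le_hp (Ne.symm hph)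
    have hcl : IsClosed ((sInf {N | N ∈ 𝓛 ∧ h < N} : Submodule ℂ H) : Set H) :=
      nest_closed hnest hp𝓛
    set w := pj (sInf {N | N ∈ 𝓛 ∧ h < N}) hcl y with hw
    have hwne : w ≠ 0 := pj_y_ne_zero hp𝓛 hcl (fun hle => hph (le_antisymm hle h_le_hp))
    have hT : rankOne w b ∈ nestAlg 𝓛 := by
      apply rankOne_mem_nestAlg
      intro N' hN'
      by_cases hle : N' ≤ h
      · exact Or.inr (Submodule.orthogonal_le hle hbh)
      · rcases hnest.2 N' hN' h hh𝓛 with h1 | h2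
        · exact absurd h1 hle
        · exact Or.inl ((sInf_le (show N' ∈ {N | N ∈ 𝓛 ∧ h < N} from
            ⟨hN', lt_of_le_of_ne h2 (fun e => hle (le_of_eq e.symm))⟩)) (pj_mem _ _ y))
    have hlie := lie_rankOne hLie hay hT
    rw [hba, zero_smul, sub_zero] at hlie
    exact smul_cancel_mem (inner_pj_self_ne_zero _ hcl hwne) hlie


lemma mainProp {𝓛 : Set (Submodule ℂ H)} {𝓜 : Submodule ℂ (H →L[ℂ] H)}
    (h𝓛 : IsContinuousNest 𝓛) (hclosed : IsClosed ((𝓜 : Set (H →L[ℂ] H))))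
    (hLie : IsLieModule 𝓛 𝓜) {x y : H} (hx : x ≠ 0) (hxy : rankOne x y ∈ 𝓜)
    {M : Submodule ℂ H} (hM𝓛 : M ∈ 𝓛) {a b : H} (haM : a ∈ M) (ham : a ∈ Mx 𝓛 x)
    (hbM : b ∈ Mᗮ) (hbh : b ∈ (Mhat 𝓛 y)ᗮ) : rankOne a b ∈ 𝓜 := by
  have hnest := h𝓛.1
  have hm𝓛 : Mx 𝓛 x ∈ 𝓛 := Mx_mem hnest x
  have hh𝓛 : Mhat 𝓛 y ∈ 𝓛 := Mhat_mem hnest y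
  have hxm : x ∈ Mx 𝓛 x := mem_Mx 𝓛 x
  have hMcl : IsClosed ((M : Set H)) := nest_closed hnest hM𝓛
  by_cases hmh : Mx 𝓛 x ≤ Mhat 𝓛 y
  · -- CASE B : m ≤ h
    -- Step 1 : rankOne a y ∈ 𝓜 by approximation from below at m
    have hstep1 : rankOne a y ∈ 𝓜 := by
      have hmbot : Mx 𝓛 x ≠ ⊥ := fun e => hx (by rw [e] at hxm; simpa using hxm)
      have hNlt : ∃ N₁, N₁ ∈ 𝓛 ∧ N₁ < Mx 𝓛 x := by
        by_contra hempty
        push_neg at hempty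
        apply hmbot
        have hme := h𝓛.2 (Mx 𝓛 x) hm𝓛
        have hS : {N | N ∈ 𝓛 ∧ N < Mx 𝓛 x} = (∅ : Set (Submodule ℂ H)) := by
          ext P
          simp only [Set.mem_setOf_eq, Set.mem_empty_iff_false, iff_false, not_and]
          exact fun h1 h2 => absurd h2 (by
            have := hempty P h1
            exact this)
        rw [hS] at hme
        have hbotcl : (⊥ : Submodule ℂ H).topologicalClosure = ⊥ :=
          IsClosed.submodule_topologicalClosure_eq
            (by rw [Submodule.bot_coe]; exact isClosed_singleton)
        simpa [sSup_empty, hbotcl] using hme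
      obtain ⟨N₁, hN₁𝓛, hN₁m⟩ := hNlt
      have hsel : ∀ k : ℕ, ∃ N, ∃ (hN𝓛 : N ∈ 𝓛) (hcl : IsClosed ((N : Set H))),
          N₁ ≤ N ∧ N < Mx 𝓛 x ∧ ‖pj N hcl a - a‖ < 1/((k:ℝ)+1) :=
        fun k => approx_left h𝓛 hm𝓛 ham hN₁𝓛 hN₁m (by positivity)
      choose N hN𝓛' hcl hge hlt hsmall using hsel
      have hmem : ∀ k, rankOne (pj (N k) (hcl k) a) y ∈ 𝓜 := fun k =>
        small_rankOne_y hnest hLie hxy (hN𝓛' k) (hcl k)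
          (le_trans (le_of_lt (hlt k)) hmh) (not_mem_of_lt_Mx (hN𝓛' k) (hlt k))
          _ (pj_mem _ _ a)
      apply mem_of_rankOne_tendsto_left hclosed hmem
      have hnorm : Filter.Tendsto (fun k => ‖pj (N k) (hcl k) a - a‖)
          Filter.atTop (nhds (0:ℝ)) := by
        apply squeeze_zero (fun k => norm_nonneg _) (g := fun k : ℕ => 1/((k:ℝ)+1))
          (fun k => le_of_lt (hsmall k))
        exact tendsto_one_div_add_atTop_nhds_zero_nat
      exact tendsto_iff_norm_sub_tendsto_zero.mpr hnorm
    exact lemFin h𝓛 hclosed hLie hstep1 (hmh ham) hbh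
  · -- CASE A : h < m
    have hhm : Mhat 𝓛 y < Mx 𝓛 x := by
      rcases hnest.2 (Mx 𝓛 x) hm𝓛 (Mhat 𝓛 y) hh𝓛 with h1 | h2
      · exact absurd h1 hmh
      · exact lt_of_le_of_ne h2 (fun e => hmh (le_of_eq e.symm))
    by_cases hMh : M ≤ Mhat 𝓛 y
    · -- A3 : M ≤ h < m
      have hMm : M < Mx 𝓛 x := lt_of_le_of_lt hMh hhm
      have hay : rankOne a y ∈ 𝓜 :=
        small_rankOne_y hnest hLie hxy hM𝓛 hMcl hMh (not_mem_of_lt_Mx hM𝓛 hMm) a haM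
      exact lemFin h𝓛 hclosed hLie hay (hMh haM) hbh
    · -- h < M
      by_cases hmM : Mx 𝓛 x ≤ M
      · -- A2 : h < N₁ < m ≤ M, approximate a from below inside (h, m)
        have hN₁ : ∃ N₁, N₁ ∈ 𝓛 ∧ Mhat 𝓛 y < N₁ ∧ N₁ < Mx 𝓛 x := by
          by_contra hc
          push_neg at hc
          apply hmh
          have hme := h𝓛.2 (Mx 𝓛 x) hm𝓛
          rw [hme]
          apply Submodule.topologicalClosure_minimal
          · apply sSup_le
            rintro P ⟨hP𝓛, hPm⟩
            rcases hnest.2 P hP𝓛 (Mhat 𝓛 y) hh𝓛 with h1 | h2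
            · exact h1
            · have := hc P hP𝓛
              have h3 : ¬ Mhat 𝓛 y < P := fun hlt' => (this hlt') hPm
              have h4 : P = Mhat 𝓛 y := le_antisymm (by
                by_contra h5
                exact h3 (lt_of_le_of_ne h2 (fun e => h5 (le_of_eq e.symm)))) h2
              exact le_of_eq h4
          · exact nest_closed hnest hh𝓛
        obtain ⟨N₁, hN₁𝓛, hhN₁, hN₁m⟩ := hN₁
        have hsel : ∀ k : ℕ, ∃ N, ∃ (hN𝓛 : N ∈ 𝓛) (hcl : IsClosed ((N : Set H))),
            N₁ ≤ N ∧ N < Mx 𝓛 x ∧ ‖pj N hcl a - a‖ < 1/((k:ℝ)+1) :=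
          fun k => approx_left h𝓛 hm𝓛 ham hN₁𝓛 hN₁m (by positivity)
        choose N hN𝓛' hcl hge hlt hsmall using hsel
        have hmem : ∀ k, rankOne (pj (N k) (hcl k) a) b ∈ 𝓜 := by
          intro k
          have hpy : pj (N k) (hcl k) y ≠ 0 :=
            pj_y_ne_zero (hN𝓛' k) (hcl k)
              (fun hle => (lt_of_lt_of_le hhN₁ (hge k)).not_ge hle)
          have hbN : b ∈ (N k)ᗮ :=
            Submodule.orthogonal_le (le_trans (le_of_lt (hlt k)) hmM) hbM
          exact lemW hnest hLie hxy (hN𝓛' k) (hcl k) hpy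
            (not_mem_of_lt_Mx (hN𝓛' k) (hlt k)) _ (pj_mem _ _ a) b hbN
        apply mem_of_rankOne_tendsto_left hclosed hmem
        have hnorm : Filter.Tendsto (fun k => ‖pj (N k) (hcl k) a - a‖)
            Filter.atTop (nhds (0:ℝ)) := by
          apply squeeze_zero (fun k => norm_nonneg _) (g := fun k : ℕ => 1/((k:ℝ)+1))
            (fun k => le_of_lt (hsmall k))
          exact tendsto_one_div_add_atTop_nhds_zero_nat
        exact tendsto_iff_norm_sub_tendsto_zero.mpr hnorm
      · -- A1 : h < M < m, apply lemW at M directly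
        have hMm : M < Mx 𝓛 x := by
          rcases hnest.2 (Mx 𝓛 x) hm𝓛 M hM𝓛 with h1 | h2
          · exact absurd h1 hmM
          · exact lt_of_le_of_ne h2 (fun e => hmM (le_of_eq e.symm))
        exact lemW hnest hLie hxy hM𝓛 hMcl (pj_y_ne_zero hM𝓛 hMcl hMh)
          (not_mem_of_lt_Mx hM𝓛 hMm) a haM b hbM


lemma projVec_eq_pj (N : Submodule ℂ H) (hN : IsClosed ((N : Set H))) (z : H) :
    projVec N z = pj N hN z := by
  rw [projVec, dif_pos hN]
  rfl

end Aux16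


theorem stmt_16 (𝓛 : Set (Submodule ℂ H)) (h𝓛 : IsContinuousNest 𝓛)
    (𝓜 : Submodule ℂ (H →L[ℂ] H)) (hclosed : IsClosed (𝓜 : Set (H →L[ℂ] H)))
    (hLie : IsLieModule 𝓛 𝓜)
    (x y : H) (hx : x ≠ 0) (hy : y ≠ 0) (hxy : rankOne x y ∈ 𝓜) :
    ∀ (z w : H), ∀ M ∈ 𝓛,
      rankOne (projVec M (projVec (Mx 𝓛 x) z))
        (projVec Mᗮ (projVec ((Mhat 𝓛 y)ᗮ) w)) ∈ 𝓜 := by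
  intro z w M hM𝓛
  have hnest := h𝓛.1
  have hMcl : IsClosed ((M : Set H)) := nest_closed hnest hM𝓛
  have hm𝓛 := Mx_mem hnest x
  have hmcl : IsClosed ((Mx 𝓛 x : Submodule ℂ H) : Set H) := nest_closed hnest hm𝓛
  have hh𝓛 := Mhat_mem hnest y
  have hhocl : IsClosed ((((Mhat 𝓛 y)ᗮ : Submodule ℂ H)) : Set H) :=
    Submodule.isClosed_orthogonal _
  have hMocl : IsClosed (((Mᗮ : Submodule ℂ H)) : Set H) := Submodule.isClosed_orthogonal _
  rw [projVec_eq_pj (Mx 𝓛 x) hmcl, projVec_eq_pj ((Mhat 𝓛 y)ᗮ) hhocl,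
      projVec_eq_pj M hMcl, projVec_eq_pj Mᗮ hMocl]
  have haM : pj M hMcl (pj (Mx 𝓛 x) hmcl z) ∈ M := pj_mem _ _ _
  have ham : pj M hMcl (pj (Mx 𝓛 x) hmcl z) ∈ Mx 𝓛 x := by
    rcases hnest.2 M hM𝓛 (Mx 𝓛 x) hm𝓛 with hMm | hmM
    · exact hMm haM
    · rw [pj_eq_self M hMcl (hmM (pj_mem _ _ z))]
      exact pj_mem _ _ z
  have hbM : pj Mᗮ hMocl (pj ((Mhat 𝓛 y)ᗮ) hhocl w) ∈ Mᗮ := pj_mem _ _ _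
  have hbh : pj Mᗮ hMocl (pj ((Mhat 𝓛 y)ᗮ) hhocl w) ∈ (Mhat 𝓛 y)ᗮ := by
    rcases hnest.2 M hM𝓛 (Mhat 𝓛 y) hh𝓛 with hMh | hhM
    · rw [pj_eq_self Mᗮ hMocl (Submodule.orthogonal_le hMh (pj_mem _ _ w))]
      exact pj_mem _ _ w
    · exact Submodule.orthogonal_le hhM hbM
  exact mainProp h𝓛 hclosed hLie hx hxy hM𝓛 haM ham hbM hbh
end
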